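/- With v''_n the volume of the perturbed diamond of parameter n and A_n the set of perturbed diamonds of parameter n whose center (x,x') satisfies (d(o,x) < r_n + T and d'(o',x') < T) or (d'(o',x') < r'_n + T and d(o,x) < T), one has |A_n| ≤ M^T (v_{r_n} v'_T + v_T v'_{r'_n}), where M bounds the generating set sizes; consequently, if v''_n / max(v_{r_n}, v'_{r'_n}) → ∞, then |A_n| / v''_n → 0 as n → ∞ for each fixed T. -/
import Mathlib

open Filter

/-- The word ball of radius `n`: all products of at most `n` generators. -/
def wordBall {G : Type*} [Group G] (S : Set G) (n : ℕ) : Set G :=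
  {g | ∃ l : List G, l.length ≤ n ∧ (∀ x ∈ l, x ∈ S) ∧ l.prod = g}

/-- The volume of the word ball of radius `n`. -/
noncomputable def ballVol {G : Type*} [Group G] (S : Set G) (n : ℕ) : ℕ :=
  (wordBall S n).ncard

/-- Word distance associated to the generating set `S`. -/
noncomputable def wordDist {G : Type*} [Group G] (S : Set G) (g h : G) : ℕ :=
  sInf {n | g⁻¹ * h ∈ wordBall S n}

/-- The volume of the sphere of radius `k` (with `s 0 = 1`). -/
noncomputable def sphVol {G : Type*} [Group G] (S : Set G) (k : ℕ) : ℕ :=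
  if k = 0 then 1 else ballVol S k - ballVol S (k - 1)

lemma one_mem_wordBall {G : Type*} [Group G] (S : Set G) (n : ℕ) :
    (1 : G) ∈ wordBall S n := ⟨[], by simp⟩

lemma wordBall_mono {G : Type*} [Group G] (S : Set G) {n m : ℕ} (h : n ≤ m) :
    wordBall S n ⊆ wordBall S m := by
  rintro g ⟨l, hl, hls, hlp⟩
  exact ⟨l, hl.trans h, hls, hlp⟩

lemma wordBall_finite {G : Type*} [Group G] (S : Finset G) (n : ℕ) :
    (wordBall (S : Set G) n).Finite := by
  induction n with
  | zero =>
    apply Set.Finite.subset (Set.finite_singleton (1 : G))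
    rintro g ⟨l, hl, -, hlp⟩
    simp only [Nat.le_zero, List.length_eq_zero_iff] at hl
    simp [← hlp, hl]
  | succ n ih =>
    apply Set.Finite.subset (Set.Finite.insert (1 : G)
      (Set.Finite.biUnion S.finite_toSet (fun s _ =>
        ih.image (fun g => s * g))))
    rintro g ⟨l, hl, hls, hlp⟩
    match l with
    | [] => simp [← hlp]
    | a :: l' =>
      right
      refine Set.mem_biUnion (hls a (by simp)) ?_
      exact ⟨l'.prod, ⟨l', by simpa using hl, fun x hx => hls x (by simp [hx]), rfl⟩,
        by simp [← hlp]⟩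

lemma ballVol_pos {G : Type*} [Group G] (S : Finset G) (n : ℕ) :
    0 < ballVol (S : Set G) n :=
  (Set.ncard_pos (wordBall_finite S n)).2 ⟨1, one_mem_wordBall _ n⟩

lemma ballVol_add_le {G : Type*} [Group G] (S : Finset G) (M : ℕ)
    (hMv : ∀ k : ℕ, ballVol (S : Set G) (k + 1) ≤ M * ballVol (S : Set G) k)
    (n t : ℕ) : ballVol (S : Set G) (n + t) ≤ M ^ t * ballVol (S : Set G) n := by
  induction t with
  | zero => simp
  | succ t ih =>
    calc ballVol (S : Set G) (n + t + 1) ≤ M * ballVol (S : Set G) (n + t) := hMv _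
      _ ≤ M * (M ^ t * ballVol (S : Set G) n) := Nat.mul_le_mul_left _ ih
      _ = M ^ (t + 1) * ballVol (S : Set G) n := by ring

lemma mem_wordBall_of_dist_lt {G : Type*} [Group G] (S : Finset G)
    (hgen : ∀ g : G, ∃ n : ℕ, g ∈ wordBall (S : Set G) n)
    {x : G} {k : ℕ} (h : wordDist (S : Set G) 1 x < k) :
    x ∈ wordBall (S : Set G) k := by
  have hne : {n | (1 : G)⁻¹ * x ∈ wordBall (S : Set G) n}.Nonempty := by
    obtain ⟨n, hn⟩ := hgen x
    exact ⟨n, by simpa using hn⟩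
  have hmem := Nat.sInf_mem hne
  simp only [Set.mem_setOf_eq, inv_one, one_mul] at hmem
  have : (1 : G)⁻¹ * x = x := by simp
  rw [wordDist] at h
  rw [this] at h
  exact wordBall_mono _ (le_of_lt h) hmem

lemma ncard_prod {G G' : Type*} (s : Set G) (t : Set G') :
    (s ×ˢ t).ncard = s.ncard * t.ncard := by
  rw [← Nat.card_coe_set_eq, ← Nat.card_coe_set_eq, ← Nat.card_coe_set_eq,
    Nat.card_congr (Equiv.Set.prod s t), Nat.card_prod]

/-- the number of corner-like centers is at most
`M^T (v_{r_n} v'_T + v_T v'_{r'_n})`, and hence is negligible compared to the perturbed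
diamond volume `v''_n` whenever `v''_n / max(v_{r_n}, v'_{r'_n}) → ∞`. -/
theorem corner_centers_negligible {G G' : Type*} [Group G] [Group G']
    (S : Finset G) (S' : Finset G')
    (hsym : ∀ s ∈ S, s⁻¹ ∈ S) (hsym' : ∀ s ∈ S', s⁻¹ ∈ S')
    (hgen : ∀ g : G, ∃ n : ℕ, g ∈ wordBall (S : Set G) n)
    (hgen' : ∀ g : G', ∃ n : ℕ, g ∈ wordBall (S' : Set G') n)
    (M : ℕ) (hMv : ∀ k : ℕ, ballVol (S : Set G) (k + 1) ≤ M * ballVol (S : Set G) k)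
    (hMv' : ∀ k : ℕ, ballVol (S' : Set G') (k + 1) ≤ M * ballVol (S' : Set G') k)
    (f r : ℕ → ℕ) (T : ℕ) :
    let A : ℕ → Set (G × G') := fun n =>
      {x : G × G' |
        (wordDist (S : Set G) 1 x.1 < r n + T ∧ wordDist (S' : Set G') 1 x.2 < T) ∨
        (wordDist (S' : Set G') 1 x.2 < f (r n) + T ∧ wordDist (S : Set G) 1 x.1 < T)}
    let v'' : ℕ → ℝ := fun n =>
      ∑ t ∈ Finset.range (r n + 1), (sphVol (S : Set G) (r n - t) : ℝ) *
        (ballVol (S' : Set G') (f t) : ℝ)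
    (∀ n : ℕ, (A n).ncard ≤
        M ^ T * (ballVol (S : Set G) (r n) * ballVol (S' : Set G') T +
          ballVol (S : Set G) T * ballVol (S' : Set G') (f (r n)))) ∧
    (Tendsto (fun n : ℕ =>
        v'' n / max (ballVol (S : Set G) (r n) : ℝ) (ballVol (S' : Set G') (f (r n)) : ℝ))
        atTop atTop →
      Tendsto (fun n : ℕ => ((A n).ncard : ℝ) / v'' n) atTop (nhds 0)) := by
  intro A v''
  -- the cardinality bound
  have key : ∀ n : ℕ, (A n).ncard ≤
      M ^ T * (ballVol (S : Set G) (r n) * ballVol (S' : Set G') T +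
        ballVol (S : Set G) T * ballVol (S' : Set G') (f (r n))) := by
    intro n
    set B1 : Set (G × G') :=
      (wordBall (S : Set G) (r n + T)) ×ˢ (wordBall (S' : Set G') T) with hB1
    set B2 : Set (G × G') :=
      (wordBall (S : Set G) T) ×ˢ (wordBall (S' : Set G') (f (r n) + T)) with hB2
    have hsub : A n ⊆ B1 ∪ B2 := by
      rintro ⟨x, y⟩ (⟨h1, h2⟩ | ⟨h1, h2⟩)
      · exact Or.inl ⟨mem_wordBall_of_dist_lt S hgen h1,
          mem_wordBall_of_dist_lt S' hgen' h2⟩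
      · exact Or.inr ⟨mem_wordBall_of_dist_lt S hgen h2,
          mem_wordBall_of_dist_lt S' hgen' h1⟩
    have hfin : (B1 ∪ B2).Finite :=
      ((wordBall_finite S _).prod (wordBall_finite S' _)).union
        ((wordBall_finite S _).prod (wordBall_finite S' _))
    calc (A n).ncard ≤ (B1 ∪ B2).ncard := Set.ncard_le_ncard hsub hfin
      _ ≤ B1.ncard + B2.ncard := Set.ncard_union_le _ _
      _ = ballVol (S : Set G) (r n + T) * ballVol (S' : Set G') T +
          ballVol (S : Set G) T * ballVol (S' : Set G') (f (r n) + T) := by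
          rw [hB1, hB2, ncard_prod, ncard_prod]; rfl
      _ ≤ (M ^ T * ballVol (S : Set G) (r n)) * ballVol (S' : Set G') T +
          ballVol (S : Set G) T * (M ^ T * ballVol (S' : Set G') (f (r n))) := by
          gcongr
          · exact ballVol_add_le S M hMv (r n) T
          · exact ballVol_add_le S' M hMv' (f (r n)) T
      _ = M ^ T * (ballVol (S : Set G) (r n) * ballVol (S' : Set G') T +
          ballVol (S : Set G) T * ballVol (S' : Set G') (f (r n))) := by ring
  refine ⟨key, fun htend => ?_⟩
  set C : ℝ := (M : ℝ) ^ T * ((ballVol (S' : Set G') T : ℝ) + (ballVol (S : Set G) T : ℝ))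
    with hC
  have hC0 : 0 ≤ C := by positivity
  set mx : ℕ → ℝ := fun n =>
    max (ballVol (S : Set G) (r n) : ℝ) (ballVol (S' : Set G') (f (r n)) : ℝ) with hmx
  have hmxpos : ∀ n, 0 < mx n := fun n =>
    lt_max_of_lt_left (by exact_mod_cast ballVol_pos S (r n))
  have hv''pos : ∀ n, 0 < v'' n := by
    intro n
    have : (0 : ℝ) < (sphVol (S : Set G) (r n - r n) : ℝ) *
        (ballVol (S' : Set G') (f (r n)) : ℝ) := by
      have h0 : sphVol (S : Set G) (r n - r n) = 1 := by simp [sphVol]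
      rw [h0]
      have : (0:ℝ) < (ballVol (S' : Set G') (f (r n)) : ℝ) := by
        exact_mod_cast ballVol_pos S' (f (r n))
      simpa using this
    refine lt_of_lt_of_le this ?_
    exact Finset.single_le_sum (f := fun t => (sphVol (S : Set G) (r n - t) : ℝ) *
      (ballVol (S' : Set G') (f t) : ℝ))
      (fun t _ => by positivity) (Finset.self_mem_range_succ (r n))
  have hbound : ∀ n, ((A n).ncard : ℝ) ≤ C * mx n := by
    intro n
    calc ((A n).ncard : ℝ) ≤
        (M : ℝ) ^ T * ((ballVol (S : Set G) (r n) : ℝ) * (ballVol (S' : Set G') T : ℝ) +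
          (ballVol (S : Set G) T : ℝ) * (ballVol (S' : Set G') (f (r n)) : ℝ)) := by
          have := key n
          push_cast
          exact_mod_cast this
      _ ≤ (M : ℝ) ^ T * (mx n * (ballVol (S' : Set G') T : ℝ) +
          (ballVol (S : Set G) T : ℝ) * mx n) := by
          gcongr
          · exact le_max_left _ _
          · exact le_max_right _ _
      _ = C * mx n := by rw [hC]; ring
  have hzero : Tendsto (fun n => C * (mx n / v'' n)) atTop (nhds 0) := by
    have h1 : Tendsto (fun n => (v'' n / mx n)⁻¹) atTop (nhds 0) :=
      htend.inv_tendsto_atTop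
    have h2 : Tendsto (fun n => mx n / v'' n) atTop (nhds 0) := by
      refine h1.congr (fun n => ?_)
      rw [inv_div]
    simpa using h2.const_mul C
  refine tendsto_of_tendsto_of_tendsto_of_le_of_le tendsto_const_nhds hzero
    (fun n => by positivity) (fun n => ?_)
  rw [mul_div_assoc']
  gcongr
  · exact hbound n
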